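/- The global function f_{S^r} of the sand automaton S^r is not surjective, not F-surjective, and not P-surjective: there is a finite configuration with no preimage at all under f_{S^r}, and a periodic configuration with no periodic preimage under f_{S^r}. -/

import Mathlib

/-- The extended integers `ℤ ∪ {-∞, +∞}`. -/
abbrev EZ : Type := WithBot (WithTop ℤ)

/-- Embedding of `ℤ` into the extended integers. -/
def finVal (n : ℤ) : EZ := ((n : WithTop ℤ) : EZ)

/-- The integer value of a finite extended integer (`0` on `±∞`). -/
def valZ (x : EZ) : ℤ := WithBot.recBotCoe 0 (fun y => WithTop.recTopCoe 0 id y) x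

/-- The measuring device `β_l^m`. -/
noncomputable def beta (l : ℕ) (m : ℤ) (n : EZ) : EZ :=
  if finVal (m + (l : ℤ)) < n then ⊤
  else if n < finVal (m - (l : ℤ)) then ⊥
  else WithBot.map (WithTop.map (fun k => k - m)) n

/-- Reference height: the value of `x` if finite, `0` if `x = ±∞`. -/
def refH (x : EZ) : ℤ := if x = ⊥ ∨ x = ⊤ then 0 else valZ x

/-- One-dimensional sandpile configurations. -/
abbrev Config : Type := ℤ → EZ

/-- The neighborhood sequence `d_r^i(c)`: the `2r`-tuple of measured differences. -/
noncomputable def nbhd (r : ℕ) (c : Config) (i : ℤ) : Fin (2 * r) → EZ :=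
  fun j => beta r (refH (c i))
    (c (i + (if (j : ℕ) < r then ((j : ℕ) : ℤ) - (r : ℤ) else ((j : ℕ) : ℤ) - (r : ℤ) + 1)))

/-- The global function of the sand automaton of radius `r` with local rule `lam`. -/
noncomputable def globalF (r : ℕ) (lam : (Fin (2 * r) → EZ) → ℤ) (c : Config) : Config :=
  fun i => if c i = ⊥ ∨ c i = ⊤ then c i
    else finVal (valZ (c i) + lam (nbhd r c i))

/-- Finite configurations. -/
def FiniteConf (c : Config) : Prop := ∃ k : ℕ, ∀ i : ℤ, (k : ℤ) ≤ |i| → c i = finVal 0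

/-- Periodic configurations. -/
def PeriodicConf (c : Config) : Prop := ∃ p : ℤ, p ≠ 0 ∧ ∀ i : ℤ, c (i + p) = c i


/-- The local rule of the sand automaton `S^r`:
`λ_{S^r}(x,y) = -1` if `x = +∞ ∧ y ≠ -∞`, `+1` if `x ≠ +∞ ∧ y = -∞`, `0` otherwise. -/
def lamSr (v : Fin 2 → EZ) : ℤ :=
  if v 0 = ⊤ ∧ v 1 ≠ ⊥ then -1
  else if v 0 ≠ ⊤ ∧ v 1 = ⊥ then 1
  else 0


/-! ### Auxiliary lemmas -/

lemma finVal_ne_bot (n : ℤ) : finVal n ≠ ⊥ := by simp [finVal]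

lemma finVal_ne_top (n : ℤ) : finVal n ≠ ⊤ := by simp [finVal]

lemma finVal_lt (a b : ℤ) : finVal a < finVal b ↔ a < b := by simp [finVal]

lemma valZ_finVal (n : ℤ) : valZ (finVal n) = n := rfl

lemma finVal_inj {a b : ℤ} (h : finVal a = finVal b) : a = b := by simpa [finVal] using h

lemma EZ_cases (x : EZ) (h1 : x ≠ ⊥) (h2 : x ≠ ⊤) : ∃ n : ℤ, x = finVal n := by
  cases x with
  | none => exact absurd rfl h1
  | some y =>
    cases y with
    | top => exact absurd rfl h2
    | coe n => exact ⟨n, rfl⟩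

lemma refH_finVal (n : ℤ) : refH (finVal n) = n := by
  rw [refH, if_neg, valZ_finVal]
  push_neg
  exact ⟨finVal_ne_bot n, finVal_ne_top n⟩

lemma beta_finVal (m a : ℤ) :
    beta 1 m (finVal a) = if m + 1 < a then ⊤ else if a < m - 1 then ⊥ else finVal (a - m) := by
  unfold beta
  simp only [show ((1:ℕ):ℤ) = 1 from rfl, finVal_lt]
  rfl

lemma nbhd_zero (c : Config) (i : ℤ) :
    nbhd 1 c i 0 = beta 1 (refH (c i)) (c (i - 1)) := by
  show beta 1 (refH (c i)) (c (i + (((0:ℕ):ℤ) - 1))) = _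
  norm_num [sub_eq_add_neg]

lemma nbhd_one (c : Config) (i : ℤ) :
    nbhd 1 c i 1 = beta 1 (refH (c i)) (c (i + 1)) := by
  show beta 1 (refH (c i)) (c (i + (((1:ℕ):ℤ) - 1 + 1))) = _
  norm_num

lemma lamSr_range (v : Fin 2 → EZ) : -1 ≤ lamSr v ∧ lamSr v ≤ 1 := by
  unfold lamSr; split_ifs <;> omega

lemma lam_eval (c : Config) (i m a b : ℤ) (hi : c i = finVal m)
    (ha : c (i - 1) = finVal a) (hb : c (i + 1) = finVal b) :
    (lamSr (nbhd 1 c i) = -1 ∧ m + 1 < a ∧ m - 1 ≤ b) ∨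
    (lamSr (nbhd 1 c i) = 1 ∧ a ≤ m + 1 ∧ b < m - 1) ∨
    (lamSr (nbhd 1 c i) = 0 ∧ (a ≤ m + 1 ∨ b < m - 1) ∧ (m + 1 < a ∨ m - 1 ≤ b)) := by
  have h0 : nbhd 1 c i 0 =
      (if m + 1 < a then ⊤ else if a < m - 1 then ⊥ else finVal (a - m)) := by
    rw [nbhd_zero, hi, refH_finVal, ha, beta_finVal]
  have h1 : nbhd 1 c i 1 =
      (if m + 1 < b then ⊤ else if b < m - 1 then ⊥ else finVal (b - m)) := by
    rw [nbhd_one, hi, refH_finVal, hb, beta_finVal]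
  unfold lamSr
  rw [h0, h1]
  by_cases P : m + 1 < a <;> by_cases Q : b < m - 1 <;>
    by_cases R : a < m - 1 <;> by_cases S : m + 1 < b <;>
    simp [P, Q, R, S, finVal_ne_top, finVal_ne_bot] <;> omega

lemma cell_val (c : Config) (i t : ℤ) (h : globalF 1 lamSr c i = finVal t) :
    ∃ n : ℤ, c i = finVal n ∧ n + lamSr (nbhd 1 c i) = t ∧ t - 1 ≤ n ∧ n ≤ t + 1 := by
  unfold globalF at h
  split_ifs at h with hc
  · rcases hc with hc | hc <;> rw [hc] at h
    · exact absurd h.symm (finVal_ne_bot t)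
    · exact absurd h.symm (finVal_ne_top t)
  · push_neg at hc
    obtain ⟨n, hn⟩ := EZ_cases _ hc.1 hc.2
    rw [hn, valZ_finVal] at h
    have he := finVal_inj h
    have hr := lamSr_range (nbhd 1 c i)
    exact ⟨n, hn, he, by omega, by omega⟩

/-- The key orphan-pattern lemma: no configuration maps to one whose values at
`-1, 0, 1, 2` are `0, 3, 0, 0`. -/
lemma key (c' : Config) (hm : globalF 1 lamSr c' (-1) = finVal 0)
    (h0 : globalF 1 lamSr c' 0 = finVal 3)
    (h1 : globalF 1 lamSr c' 1 = finVal 0)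
    (h2 : globalF 1 lamSr c' 2 = finVal 0) : False := by
  obtain ⟨a, hca, -, ha1, ha2⟩ := cell_val _ _ _ hm
  obtain ⟨m, hcm, hem, hm1, hm2⟩ := cell_val _ _ _ h0
  obtain ⟨b, hcb, heb, hb1, hb2⟩ := cell_val _ _ _ h1
  obtain ⟨d, hcd, -, hd1, hd2⟩ := cell_val _ _ _ h2
  have L0 := lam_eval c' 0 m a b hcm
    (by rw [show (0:ℤ) - 1 = -1 by norm_num, hca])
    (by rw [show (0:ℤ) + 1 = 1 by norm_num, hcb])
  have L1 := lam_eval c' 1 b m d hcb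
    (by rw [show (1:ℤ) - 1 = 0 by norm_num, hcm])
    (by rw [show (1:ℤ) + 1 = 2 by norm_num, hcd])
  rcases L0 with ⟨e0, p0, q0⟩ | ⟨e0, p0, q0⟩ | ⟨e0, p0, q0⟩ <;>
    rcases L1 with ⟨e1, p1, q1⟩ | ⟨e1, p1, q1⟩ | ⟨e1, p1, q1⟩ <;> omega

/-- The orphan finite configuration: a single column of height `3`. -/
def cOrph : Config := fun i => if i = 0 then finVal 3 else finVal 0

/-- The orphan periodic configuration: a column of height `3` every `4` cells. -/
def cPer : Config := fun i => if i % 4 = 0 then finVal 3 else finVal 0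

lemma cOrph_finite : FiniteConf cOrph := by
  refine ⟨1, fun i hi => ?_⟩
  have : i ≠ 0 := fun h => by simp [h] at hi
  simp [cOrph, this]

lemma cPer_periodic : PeriodicConf cPer := by
  refine ⟨4, by norm_num, fun i => ?_⟩
  have : (i + 4) % 4 = i % 4 := by omega
  simp only [cPer, this]

lemma cOrph_noPre (c' : Config) : globalF 1 lamSr c' ≠ cOrph := by
  intro h
  exact key c' (by rw [congrFun h (-1)]; rfl) (by rw [congrFun h 0]; rfl)
    (by rw [congrFun h 1]; rfl) (by rw [congrFun h 2]; rfl)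

lemma cPer_noPre (c' : Config) : globalF 1 lamSr c' ≠ cPer := by
  intro h
  exact key c' (by rw [congrFun h (-1)]; rfl) (by rw [congrFun h 0]; rfl)
    (by rw [congrFun h 1]; rfl) (by rw [congrFun h 2]; rfl)

/-- `f_{S^r}` is not surjective, not `F`-surjective and not `P`-surjective: there is
a finite configuration with no preimage at all under `f_{S^r}`, and a periodic
configuration with no periodic preimage under `f_{S^r}`. -/
theorem Sr_not_surjective :
    ¬ Function.Surjective (globalF 1 lamSr) ∧
    ¬ (∀ c : Config, FiniteConf c → ∃ c', FiniteConf c' ∧ globalF 1 lamSr c' = c) ∧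
    ¬ (∀ c : Config, PeriodicConf c → ∃ c', PeriodicConf c' ∧ globalF 1 lamSr c' = c) ∧
    (∃ c : Config, FiniteConf c ∧ ∀ c' : Config, globalF 1 lamSr c' ≠ c) ∧
    (∃ c : Config, PeriodicConf c ∧ ∀ c' : Config, PeriodicConf c' → globalF 1 lamSr c' ≠ c) := by
  
  refine ⟨?_, ?_, ?_, ⟨cOrph, cOrph_finite, cOrph_noPre⟩,
    ⟨cPer, cPer_periodic, fun c' _ => cPer_noPre c'⟩⟩
  · intro hs
    obtain ⟨c', hc'⟩ := hs cOrph
    exact cOrph_noPre c' hc'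
  · intro hs
    obtain ⟨c', -, hc'⟩ := hs cOrph cOrph_finite
    exact cOrph_noPre c' hc'
  · intro hs
    obtain ⟨c', -, hc'⟩ := hs cPer cPer_periodic
    exact cPer_noPre c' hc'
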